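/- arXiv:1512.07619 — 5 statements merged into one kernel-verified Lean document; each statement's English description precedes it below -/
import Mathlib

section
/- Let t, r, a be real numbers such that Λ(t + a) = Λ(t) + r, and set f² = (Λ(t) + r)(1 − Λ(t) − r). If f² > 0 and |r| ≤ f²/4, then |a| ≤ 4|r|/(3f²). -/
noncomputable def logistic : ℝ → ℝ := fun t => Real.exp t / (1 + Real.exp t)

noncomputable def logit (x : ℝ) : ℝ := Real.log x - Real.log (1 - x)

lemma logistic_pos (x : ℝ) : 0 < logistic x := by
  unfold logistic; positivity

lemma logistic_lt_one (x : ℝ) : logistic x < 1 := by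
  unfold logistic
  rw [div_lt_one (by positivity)]
  linarith [Real.exp_pos x]

lemma logit_logistic (x : ℝ) : logit (logistic x) = x := by
  unfold logit logistic
  have h1 : (0:ℝ) < 1 + Real.exp x := by positivity
  have h2 : 1 - Real.exp x / (1 + Real.exp x) = 1 / (1 + Real.exp x) := by
    field_simp
    ring
  rw [h2, Real.log_div (Real.exp_ne_zero x) (ne_of_gt h1),
    Real.log_div one_ne_zero (ne_of_gt h1), Real.log_exp, Real.log_one]
  ring

lemma logit_hasDerivAt {x : ℝ} (h0 : 0 < x) (h1 : x < 1) :
    HasDerivAt logit (1/(x*(1-x))) x := by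
  have ha : HasDerivAt Real.log x⁻¹ x := Real.hasDerivAt_log (ne_of_gt h0)
  have hb0 : HasDerivAt (fun y : ℝ => 1 - y) (-1) x := by
    simpa using (hasDerivAt_id x).const_sub 1
  have hb : HasDerivAt (fun y : ℝ => Real.log (1 - y)) ((1-x)⁻¹ * (-1)) x :=
    (Real.hasDerivAt_log (by linarith : (1:ℝ)-x ≠ 0)).comp x hb0
  have h := ha.sub hb
  have heq : x⁻¹ - (1-x)⁻¹ * (-1) = 1/(x*(1-x)) := by
    have hx : x ≠ 0 := ne_of_gt h0
    have hx1 : (1:ℝ) - x ≠ 0 := by linarith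
    field_simp
    ring
  rw [heq] at h
  exact h

lemma key_bound (r f2 c q : ℝ) (hc0 : 0 < c) (hc1 : c < 1) (hq0 : 0 < q) (hq1 : q < 1)
    (hcq : |c - q| ≤ |r|) (hf2 : f2 = q*(1-q)) (hf2pos : 0 < f2) (hr : |r| ≤ f2/4) :
    |r| / (c*(1-c)) ≤ 4*|r|/(3*f2) := by
  have h1 : c*(1-c) ≥ 3*f2/4 := by
    have habs : -(|r|) ≤ c - q ∧ c - q ≤ |r| := abs_le.mp hcq
    nlinarith [abs_nonneg r]
  have h2 : (0:ℝ) < 3*f2/4 := by linarith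
  calc |r| / (c*(1-c)) ≤ |r| / (3*f2/4) :=
        div_le_div_of_nonneg_left (abs_nonneg r) h2 h1
    _ = 4*|r|/(3*f2) := by field_simp

theorem logistic_index_correction_bound (t r a f2 : ℝ)
    (ha : logistic (t + a) = logistic t + r)
    (hf2 : f2 = (logistic t + r) * (1 - logistic t - r))
    (hf2pos : 0 < f2) (hr : |r| ≤ f2 / 4) :
    |a| ≤ 4 * |r| / (3 * f2) := by
  set p := logistic t with hp
  set q := p + r with hqdef
  have hp0 : 0 < p := logistic_pos t
  have hp1 : p < 1 := logistic_lt_one t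
  have hq0 : 0 < q := by
    by_contra h
    push_neg at h
    nlinarith [hf2]
  have hq1 : q < 1 := by
    by_contra h
    push_neg at h
    nlinarith [hf2]
  have hf2' : f2 = q * (1 - q) := by rw [hf2]; ring
  -- a = logit q - logit p
  have haq : a = logit q - logit p := by
    have h1 : logit (logistic (t+a)) = t + a := logit_logistic (t+a)
    have h2 : logit (logistic t) = t := logit_logistic t
    rw [ha] at h1
    rw [← hp] at h2
    linarith
  rcases lt_trichotomy r 0 with hrneg | hrzero | hrpos
  · -- r < 0, q < p, MVT on [q, p]
    have hqp : q < p := by rw [hqdef]; linarith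
    obtain ⟨c, hc, hderiv⟩ := exists_hasDerivAt_eq_slope logit (fun x => 1/(x*(1-x))) hqp
      (fun x hx => (logit_hasDerivAt (lt_of_lt_of_le hq0 hx.1) (lt_of_le_of_lt hx.2 hp1)).continuousAt.continuousWithinAt)
      (fun x hx => logit_hasDerivAt (lt_trans hq0 hx.1) (lt_trans hx.2 hp1))
    have hc0 : 0 < c := lt_trans hq0 hc.1
    have hc1 : c < 1 := lt_trans hc.2 hp1
    have hcc : 0 < c * (1-c) := by nlinarith
    have hacalc : a = r / (c * (1-c)) := by
      have : (1:ℝ)/(c*(1-c)) = (logit p - logit q)/(p - q) := hderiv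
      rw [haq]
      have hpq : p - q ≠ 0 := by linarith
      have hc1' : (1:ℝ) - c ≠ 0 := by linarith
      field_simp at this ⊢
      nlinarith [this]
    rw [hacalc, abs_div, abs_of_pos hcc]
    apply key_bound r f2 c q hc0 hc1 hq0 hq1 _ hf2' hf2pos hr
    have : |c - q| ≤ |p - q| := by
      rw [abs_of_pos (by linarith [hc.1] : (0:ℝ) < c - q), abs_of_pos (by linarith : (0:ℝ) < p - q)]
      linarith [hc.2]
    calc |c - q| ≤ |p - q| := this
      _ = |r| := by rw [hqdef]; rw [abs_sub_comm]; simp [abs_sub_comm]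
  · -- r = 0
    subst hrzero
    simp only [add_zero] at hqdef
    have : a = 0 := by
      rw [haq, hqdef]; simp
    rw [this]
    simp
  · -- r > 0, p < q, MVT on [p, q]
    have hpq : p < q := by rw [hqdef]; linarith
    obtain ⟨c, hc, hderiv⟩ := exists_hasDerivAt_eq_slope logit (fun x => 1/(x*(1-x))) hpq
      (fun x hx => (logit_hasDerivAt (lt_of_lt_of_le hp0 hx.1) (lt_of_le_of_lt hx.2 hq1)).continuousAt.continuousWithinAt)
      (fun x hx => logit_hasDerivAt (lt_trans hp0 hx.1) (lt_trans hx.2 hq1))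
    have hc0 : 0 < c := lt_trans hp0 hc.1
    have hc1 : c < 1 := lt_trans hc.2 hq1
    have hcc : 0 < c * (1-c) := by nlinarith
    have hacalc : a = r / (c * (1-c)) := by
      have : (1:ℝ)/(c*(1-c)) = (logit q - logit p)/(q - p) := hderiv
      rw [haq]
      have hqp : q - p ≠ 0 := by linarith
      have hc1' : (1:ℝ) - c ≠ 0 := by linarith
      field_simp at this ⊢
      nlinarith [this]
    rw [hacalc, abs_div, abs_of_pos hcc]
    apply key_bound r f2 c q hc0 hc1 hq0 hq1 _ hf2' hf2pos hr
    have : |c - q| ≤ |p - q| := by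
      rw [abs_of_neg (by linarith [hc.2] : c - q < 0), abs_of_neg (by linarith : p - q < 0)]
      linarith [hc.1]
    calc |c - q| ≤ |p - q| := this
      _ = |r| := by rw [hqdef]; simp [abs_sub_comm]
end

section
/- Lasso cone lemma: Let f : ℝ^p → ℝ be convex and differentiable, let Ψ be a diagonal p×p matrix with strictly positive diagonal entries, let λ > 0 and c > 1. Suppose θ̂ minimizes θ ↦ f(θ) + λ‖Ψθ‖₁ over ℝ^p, and let θ* ∈ ℝ^p satisfy ‖Ψ⁻¹∇f(θ*)‖∞ ≤ λ/c. Then, with T = supp(θ*) and δ = θ̂ − θ*, the restricted cone condition holds: Σ_{j∉T} |Ψ_jj δ_j| ≤ ((c+1)/(c−1)) · Σ_{j∈T} |Ψ_jj δ_j|. -/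
open scoped Classical

lemma convex_grad_ineq {F : Type*} [NormedAddCommGroup F] [InnerProductSpace ℝ F]
    [CompleteSpace F] {f : F → ℝ}
    (hconv : ConvexOn ℝ Set.univ f) {x gx : F}
    (hg : HasGradientAt f gx x) (y : F) :
    (inner ℝ gx (y - x) : ℝ) ≤ f y - f x := by
  have hline : HasDerivAt (fun t : ℝ => x + t • (y - x)) (y - x) 0 := by
    simpa using ((hasDerivAt_id (0:ℝ)).smul_const (y - x)).const_add x
  have hφ : HasDerivAt (fun t : ℝ => f (x + t • (y - x))) (inner ℝ gx (y - x) : ℝ) 0 := by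
    have hfx : HasFDerivAt f ((InnerProductSpace.toDual ℝ F) gx) (x + (0:ℝ) • (y - x)) := by
      simpa using hg.hasFDerivAt
    have h := hfx.comp_hasDerivAt 0 hline
    simp [InnerProductSpace.toDual_apply_apply] at h; exact h
  have hslope : Filter.Tendsto (fun t : ℝ => (f (x + t • (y - x)) - f x) / t)
      (nhdsWithin 0 (Set.Ioi 0)) (nhds (inner ℝ gx (y - x) : ℝ)) := by
    have := hφ.hasDerivWithinAt (s := Set.Ioi (0:ℝ))
    have h2 := (hasDerivWithinAt_iff_tendsto_slope.mp this)
    have h3 : nhdsWithin (0:ℝ) (Set.Ioi 0 \ {0}) = nhdsWithin 0 (Set.Ioi 0) := by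
      congr 1
      ext t; constructor
      · rintro ⟨h, _⟩; exact h
      · intro h; exact ⟨h, ne_of_gt h⟩
    rw [h3] at h2
    refine h2.congr' ?_
    filter_upwards [self_mem_nhdsWithin] with t ht
    simp [slope, (ne_of_gt (Set.mem_Ioi.mp ht)), div_eq_inv_mul]
  refine le_of_tendsto hslope ?_
  filter_upwards [Ioc_mem_nhdsGT_of_mem (by simp : (0:ℝ) ∈ Set.Ico 0 1)] with t ht
  have h1 : f (x + t • (y - x)) ≤ (1 - t) * f x + t * f y := by
    have h := hconv.2 (Set.mem_univ x) (Set.mem_univ y)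
      (by linarith [ht.1.le, ht.2] : (0:ℝ) ≤ 1 - t) ht.1.le (by ring)
    have he : (1 - t) • x + t • y = x + t • (y - x) := by
      rw [sub_smul, smul_sub, one_smul]; abel
    rw [he] at h
    simpa [smul_eq_mul] using h
  rw [div_le_iff₀ ht.1]
  nlinarith [ht.1]

theorem lasso_cone_condition (p : ℕ)
    (f : EuclideanSpace ℝ (Fin p) → ℝ)
    (g : EuclideanSpace ℝ (Fin p) → EuclideanSpace ℝ (Fin p))
    (hconv : ConvexOn ℝ Set.univ f)
    (hgrad : ∀ θ, HasGradientAt f (g θ) θ)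
    (Ψ : Fin p → ℝ) (hΨ : ∀ j, 0 < Ψ j)
    (lam c : ℝ) (hlam : 0 < lam) (hc : 1 < c)
    (θhat θstar : EuclideanSpace ℝ (Fin p))
    (hmin : ∀ θ : EuclideanSpace ℝ (Fin p),
      f θhat + lam * ∑ j, |Ψ j * θhat j| ≤ f θ + lam * ∑ j, |Ψ j * θ j|)
    (hscore : ∀ j, |(Ψ j)⁻¹ * g θstar j| ≤ lam / c) :
    ∑ j ∈ Finset.univ.filter (fun j => θstar j = 0), |Ψ j * (θhat j - θstar j)| ≤
      ((c + 1) / (c - 1)) *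
        ∑ j ∈ Finset.univ.filter (fun j => θstar j ≠ 0), |Ψ j * (θhat j - θstar j)| := by
  set A := ∑ j ∈ Finset.univ.filter (fun j => θstar j = 0), |Ψ j * (θhat j - θstar j)| with hA
  set B := ∑ j ∈ Finset.univ.filter (fun j => θstar j ≠ 0), |Ψ j * (θhat j - θstar j)| with hB
  have hA0 : 0 ≤ A := Finset.sum_nonneg fun j _ => abs_nonneg _
  have hB0 : 0 ≤ B := Finset.sum_nonneg fun j _ => abs_nonneg _
  -- total sum
  have htot : ∑ j, |Ψ j * (θhat j - θstar j)| = A + B := by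
    rw [hA, hB]
    exact (Finset.sum_filter_add_sum_filter_not Finset.univ (fun j => θstar j = 0) _).symm
  -- gradient inequality
  have hgi : (inner ℝ (g θstar) (θhat - θstar) : ℝ) ≤ f θhat - f θstar :=
    convex_grad_ineq hconv (hgrad θstar) θhat
  have hinner : (inner ℝ (g θstar) (θhat - θstar) : ℝ)
      = ∑ j, g θstar j * (θhat j - θstar j) := by
    rw [PiLp.inner_apply]
    refine Finset.sum_congr rfl fun j _ => ?_
    simp [RCLike.inner_apply, mul_comm]
  -- bound the inner product
  have habs : |∑ j, g θstar j * (θhat j - θstar j)| ≤ (lam / c) * (A + B) := by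
    rw [← htot, Finset.mul_sum]
    refine (Finset.abs_sum_le_sum_abs _ _).trans (Finset.sum_le_sum fun j _ => ?_)
    have h1 : g θstar j * (θhat j - θstar j)
        = ((Ψ j)⁻¹ * g θstar j) * (Ψ j * (θhat j - θstar j)) := by
      field_simp [(hΨ j).ne']
    rw [h1, abs_mul]
    exact mul_le_mul_of_nonneg_right (hscore j) (abs_nonneg _)
  -- penalty difference
  have hpen : A - B ≤ (∑ j, |Ψ j * θhat j|) - ∑ j, |Ψ j * θstar j| := by
    have h1 : (∑ j, |Ψ j * θhat j|) - ∑ j, |Ψ j * θstar j|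
        = ∑ j, (|Ψ j * θhat j| - |Ψ j * θstar j|) := by
      rw [Finset.sum_sub_distrib]
    rw [h1, ← (Finset.sum_filter_add_sum_filter_not Finset.univ (fun j => θstar j = 0)
      (fun j => |Ψ j * θhat j| - |Ψ j * θstar j|))]
    have h2 : A ≤ ∑ j ∈ Finset.univ.filter (fun j => θstar j = 0),
        (|Ψ j * θhat j| - |Ψ j * θstar j|) := by
      rw [hA]
      refine Finset.sum_le_sum fun j hj => ?_
      have hz : θstar j = 0 := (Finset.mem_filter.mp hj).2
      simp [hz]
    have h3 : -B ≤ ∑ j ∈ Finset.univ.filter (fun j => ¬θstar j = 0),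
        (|Ψ j * θhat j| - |Ψ j * θstar j|) := by
      rw [hB, ← Finset.sum_neg_distrib]
      refine Finset.sum_le_sum fun j hj => ?_
      have := abs_sub_abs_le_abs_sub (Ψ j * θstar j) (Ψ j * θhat j)
      have he : Ψ j * θstar j - Ψ j * θhat j = -(Ψ j * (θhat j - θstar j)) := by ring
      rw [he, abs_neg] at this
      linarith
    linarith
  -- minimality at θstar
  have hm := hmin θstar
  have hkey : lam * (A - B) ≤ (lam / c) * (A + B) := by
    have h1 : lam * (A - B) ≤ f θstar - f θhat := by
      have := mul_le_mul_of_nonneg_left hpen hlam.le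
      linarith
    have h2 : f θstar - f θhat ≤ -(∑ j, g θstar j * (θhat j - θstar j)) := by
      rw [hinner] at hgi; linarith
    have h3 : -(∑ j, g θstar j * (θhat j - θstar j)) ≤ (lam / c) * (A + B) :=
      (neg_le_abs _).trans habs
    linarith
  -- conclude
  rw [div_mul_eq_mul_div, le_div_iff₀ (by linarith : (0:ℝ) < c - 1)]
  have hlc : 0 < lam / c := div_pos hlam (by linarith)
  have hc0 : (0:ℝ) < c := by linarith
  have h4 : lam * (c * (A - B)) ≤ lam * (A + B) := by
    calc lam * (c * (A - B)) = c * (lam * (A - B)) := by ring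
      _ ≤ c * (lam / c * (A + B)) := mul_le_mul_of_nonneg_left hkey hc0.le
      _ = lam * (A + B) := by field_simp
  have h5 : c * (A - B) ≤ A + B := le_of_mul_le_mul_left h4 hlam
  nlinarith
end

section
/- Lasso prediction-rate bound: Let X be an n×p real matrix, ε ∈ ℝⁿ, θ* ∈ ℝ^p with support T of cardinality s ≥ 1, and Y = Xθ* + ε. Let θ̂ minimize θ ↦ (1/(2n))‖Y − Xθ‖₂² + (λ/n)‖θ‖₁. Suppose λ ≥ c·‖Xᵀε‖∞ for some c > 1, and let c̄ = (c+1)/(c−1). Assume the restricted eigenvalue condition: there is κ > 0 such that for every δ ≠ 0 with ‖δ_{T^c}‖₁ ≤ c̄‖δ_T‖₁ one has ‖Xδ‖₂/√n ≥ κ‖δ_T‖₂. Then ‖X(θ̂ − θ*)‖₂/√n ≤ (1 + 1/c)·λ√s/(n·κ). -/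
open scoped Classical

private lemma aux_limit (A B : ℝ) (hB : 0 ≤ B)
    (h : ∀ t : ℝ, 0 < t → t ≤ 1 → A ≤ t * B) : A ≤ 0 := by
  have h' : ∀ ε > (0:ℝ), A ≤ 0 + ε := by
    intro ε hε
    have hB1 : (0:ℝ) < B + 1 := by linarith
    have ht1 : 0 < min 1 (ε / (B + 1)) := lt_min one_pos (div_pos hε hB1)
    have h2 := h _ ht1 (min_le_left _ _)
    have h3 : min 1 (ε / (B + 1)) * B ≤ ε := by
      have h4 : min 1 (ε / (B + 1)) ≤ ε / (B + 1) := min_le_right _ _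
      have h5 := mul_le_mul_of_nonneg_right h4 hB
      have h6 : ε / (B + 1) * B ≤ ε := by
        rw [div_mul_eq_mul_div, div_le_iff₀ hB1]; nlinarith
      linarith
    linarith
  exact le_of_forall_pos_le_add h'

theorem lasso_prediction_rate (n p : ℕ) (hn : 0 < n)
    (X : Matrix (Fin n) (Fin p) ℝ) (ε : Fin n → ℝ) (θstar : Fin p → ℝ)
    (T : Finset (Fin p)) (hT : T = Finset.univ.filter (fun j => θstar j ≠ 0))
    (s : ℕ) (hsdef : s = T.card) (hs : 1 ≤ s)
    (Y : Fin n → ℝ) (hY : Y = X.mulVec θstar + ε)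
    (lam c κ cbar : ℝ) (hc : 1 < c) (hκ : 0 < κ) (hcbar : cbar = (c + 1) / (c - 1))
    (hlam : ∀ j, c * |∑ i, X i j * ε i| ≤ lam)
    (θhat : Fin p → ℝ)
    (hmin : ∀ θ : Fin p → ℝ,
      (1 / (2 * n)) * ∑ i, (Y i - X.mulVec θhat i) ^ 2 + (lam / n) * ∑ j, |θhat j| ≤
        (1 / (2 * n)) * ∑ i, (Y i - X.mulVec θ i) ^ 2 + (lam / n) * ∑ j, |θ j|)
    (hRE : ∀ δ : Fin p → ℝ, δ ≠ 0 →
      (∑ j ∈ Finset.univ.filter (fun j => θstar j = 0), |δ j|) ≤ cbar * ∑ j ∈ T, |δ j| →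
      κ * Real.sqrt (∑ j ∈ T, (δ j) ^ 2) ≤
        Real.sqrt (∑ i, (X.mulVec δ i) ^ 2) / Real.sqrt n) :
    Real.sqrt (∑ i, (X.mulVec (θhat - θstar) i) ^ 2) / Real.sqrt n ≤
      (1 + 1 / c) * lam * Real.sqrt s / (n * κ) := by
  have hn' : (0:ℝ) < (n:ℝ) := by exact_mod_cast hn
  have hc0 : (0:ℝ) < c := by linarith
  set δ : Fin p → ℝ := θhat - θstar with hδdef
  set b : Fin n → ℝ := X.mulVec δ with hbdef
  set Q : ℝ := ∑ i, b i ^ 2 with hQdef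
  set ST : ℝ := ∑ j ∈ T, |δ j| with hSTdef
  set STc : ℝ := ∑ j ∈ Finset.univ.filter (fun j => θstar j = 0), |δ j| with hSTcdef
  set Ns : ℝ := ∑ j, |θstar j| with hNsdef
  set Nh : ℝ := ∑ j, |θhat j| with hNhdef
  set IP : ℝ := ∑ i, ε i * b i with hIPdef
  clear_value δ b Q ST STc Ns Nh IP
  -- lam ≥ 0
  have hlam0 : 0 ≤ lam := by
    have hTne : T.Nonempty := Finset.card_pos.mp (by omega)
    obtain ⟨j₀, _⟩ := hTne
    exact le_trans (by positivity) (hlam j₀)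
  have hQnn : 0 ≤ Q := by rw [hQdef]; positivity
  -- pointwise facts
  have hbi : ∀ i, b i = X.mulVec θhat i - X.mulVec θstar i := by
    intro i; rw [hbdef, hδdef, Matrix.mulVec_sub]; rfl
  have hYb : ∀ i, Y i - X.mulVec θhat i = ε i - b i := by
    intro i; rw [hY, hbi]; simp [Pi.add_apply]; ring
  -- key optimality inequality: Q ≤ IP + lam * (Ns - Nh)
  have keyineq : Q ≤ IP + lam * (Ns - Nh) := by
    have main : ∀ t : ℝ, 0 < t → t ≤ 1 →
        2*Q - 2*IP - 2*lam*(Ns - Nh) ≤ t * Q := by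
      intro t ht ht1
      have H := hmin (θhat - t • δ)
      have hmv : ∀ i, X.mulVec (θhat - t • δ) i = X.mulVec θhat i - t * b i := by
        intro i
        rw [Matrix.mulVec_sub, Matrix.mulVec_smul]
        simp [hbdef]
      have hq1 : ∑ i, (Y i - X.mulVec θhat i) ^ 2 = ∑ i, (ε i - b i) ^ 2 :=
        Finset.sum_congr rfl fun i _ => by rw [hYb]
      have hq2 : ∑ i, (Y i - X.mulVec (θhat - t • δ) i) ^ 2
          = (∑ i, (ε i - b i) ^ 2) + t * (2*(IP - Q) + t * Q) := by
        have e1 : ∀ i, (Y i - X.mulVec (θhat - t • δ) i) ^ 2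
            = (ε i - b i) ^ 2 + t * (2*(ε i * b i - b i ^ 2) + t * b i ^ 2) := by
          intro i
          rw [hmv, show Y i - (X.mulVec θhat i - t * b i)
            = (Y i - X.mulVec θhat i) + t * b i from by ring, hYb]
          ring
        rw [Finset.sum_congr rfl fun i _ => e1 i, Finset.sum_add_distrib, ← Finset.mul_sum]
        congr 1
        rw [Finset.sum_add_distrib, ← Finset.mul_sum, Finset.sum_sub_distrib, ← Finset.mul_sum,
          hIPdef, hQdef]
      have hL1 : ∑ j, |(θhat - t • δ) j| ≤ Nh + t * (Ns - Nh) := by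
        have e2 : ∀ j, |(θhat - t • δ) j| ≤ (1-t)*|θhat j| + t*|θstar j| := by
          intro j
          have e3 : (θhat - t • δ) j = (1-t)*θhat j + t * θstar j := by
            simp [hδdef, Pi.sub_apply, Pi.smul_apply, smul_eq_mul]; ring
          rw [e3]
          calc |(1-t)*θhat j + t * θstar j| ≤ |(1-t)*θhat j| + |t * θstar j| := abs_add_le _ _
            _ = (1-t)*|θhat j| + t*|θstar j| := by
                rw [abs_mul, abs_mul, abs_of_nonneg (by linarith), abs_of_nonneg ht.le]
        calc ∑ j, |(θhat - t • δ) j| ≤ ∑ j, ((1-t)*|θhat j| + t*|θstar j|) :=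
              Finset.sum_le_sum fun j _ => e2 j
          _ = Nh + t * (Ns - Nh) := by
              rw [Finset.sum_add_distrib, ← Finset.mul_sum, ← Finset.mul_sum,
                ← hNhdef, ← hNsdef]; ring
      rw [hq1, hq2] at H
      have hlamn : 0 ≤ lam / (n:ℝ) := div_nonneg hlam0 hn'.le
      have hmul := mul_le_mul_of_nonneg_left hL1 hlamn
      have e4 : (1/(2*(n:ℝ))) * ((∑ i, (ε i - b i) ^ 2) + t * (2*(IP - Q) + t * Q))
          = (1/(2*(n:ℝ))) * (∑ i, (ε i - b i) ^ 2)
            + (1/(2*(n:ℝ))) * (t * (2*(IP - Q) + t * Q)) := by ring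
      have e5 : (lam/(n:ℝ)) * (Nh + t * (Ns - Nh))
          = (lam/(n:ℝ)) * Nh + (lam/(n:ℝ)) * (t * (Ns - Nh)) := by ring
      have target0 : 0 ≤ (1/(2*(n:ℝ))) * (t * (2*(IP - Q) + t * Q))
          + (lam/(n:ℝ)) * (t * (Ns - Nh)) := by linarith
      have e3' : (2*(n:ℝ)) * ((1/(2*(n:ℝ))) * (t * (2*(IP - Q) + t * Q))
          + (lam/(n:ℝ)) * (t * (Ns - Nh)))
          = t * (2*(IP - Q) + t * Q) + 2*lam*(t * (Ns - Nh)) := by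
        field_simp
      have target1 : 0 ≤ t * (2*(IP - Q) + t * Q) + 2*lam*(t * (Ns - Nh)) :=
        e3' ▸ mul_nonneg (by positivity) target0
      have e6 : t * (2*(IP - Q) + t * Q) + 2*lam*(t * (Ns - Nh))
          = t * (2*(IP - Q) + t * Q + 2*lam*(Ns - Nh)) := by ring
      rw [e6] at target1
      have target2 : 0 ≤ 2*(IP - Q) + t * Q + 2*lam*(Ns - Nh) := by
        have h7 := div_nonneg target1 ht.le
        rwa [mul_div_cancel_left₀ _ (ne_of_gt ht)] at h7
      linarith
    have := aux_limit (2*Q - 2*IP - 2*lam*(Ns - Nh)) Q hQnn main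
    linarith
  -- bound on IP
  have hIP : IP ≤ (lam/c) * (ST + STc) := by
    have swap : IP = ∑ j, (∑ i, X i j * ε i) * δ j := by
      rw [hIPdef]
      calc ∑ i, ε i * b i = ∑ i, ∑ j, ε i * (X i j * δ j) := by
            apply Finset.sum_congr rfl; intro i _
            rw [show b i = ∑ j, X i j * δ j from by
              rw [hbdef]; simp [Matrix.mulVec, dotProduct], Finset.mul_sum]
        _ = ∑ j, ∑ i, ε i * (X i j * δ j) := Finset.sum_comm
        _ = ∑ j, (∑ i, X i j * ε i) * δ j := by
            apply Finset.sum_congr rfl; intro j _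
            rw [Finset.sum_mul]
            apply Finset.sum_congr rfl; intro i _; ring
    have hsplit : ∑ j, |δ j| = ST + STc := by
      rw [hSTdef, hSTcdef, hT,
        ← Finset.sum_filter_add_sum_filter_not Finset.univ (fun j => θstar j ≠ 0) (fun j => |δ j|)]
      congr 1
      apply Finset.sum_congr _ (fun _ _ => rfl)
      simp [not_not]
    calc IP = ∑ j, (∑ i, X i j * ε i) * δ j := swap
      _ ≤ ∑ j, (lam/c) * |δ j| := by
          apply Finset.sum_le_sum; intro j _
          have h1 : |∑ i, X i j * ε i| ≤ lam/c := by
            rw [le_div_iff₀ hc0]; have := hlam j; nlinarith [abs_nonneg (∑ i, X i j * ε i)]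
          calc (∑ i, X i j * ε i) * δ j ≤ |(∑ i, X i j * ε i) * δ j| := le_abs_self _
            _ = |∑ i, X i j * ε i| * |δ j| := abs_mul _ _
            _ ≤ (lam/c) * |δ j| := mul_le_mul_of_nonneg_right h1 (abs_nonneg _)
      _ = (lam/c) * ∑ j, |δ j| := by rw [Finset.mul_sum]
      _ = (lam/c) * (ST + STc) := by rw [hsplit]
  -- bound on Ns - Nh
  have hNdiff : Ns - Nh ≤ ST - STc := by
    have hNs : Ns = ∑ j ∈ T, |θstar j| := by
      rw [hNsdef, hT]
      rw [← Finset.sum_filter_add_sum_filter_not Finset.univ (fun j => θstar j ≠ 0)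
        (fun j => |θstar j|)]
      have : ∑ j ∈ Finset.univ.filter (fun j => ¬θstar j ≠ 0), |θstar j| = 0 := by
        apply Finset.sum_eq_zero; intro j hj
        simp only [Finset.mem_filter, not_not] at hj
        rw [hj.2, abs_zero]
      rw [this, add_zero]
    have hNh : Nh = (∑ j ∈ T, |θhat j|) + STc := by
      rw [hNhdef,
        ← Finset.sum_filter_add_sum_filter_not Finset.univ (fun j => θstar j ≠ 0)
          (fun j => |θhat j|)]
      congr 1
      · rw [hT]
      · rw [hSTcdef]
        apply Finset.sum_congr
        · simp [not_not]
        · intro j hj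
          simp only [Finset.mem_filter] at hj
          rw [hδdef]
          simp [hj.2]
    have hTle : ∑ j ∈ T, (|θstar j| - |θhat j|) ≤ ST := by
      rw [hSTdef]
      apply Finset.sum_le_sum; intro j _
      calc |θstar j| - |θhat j| ≤ |θstar j - θhat j| := abs_sub_abs_le_abs_sub _ _
        _ = |δ j| := by rw [hδdef]; simp [abs_sub_comm]
    have hdist : ∑ j ∈ T, (|θstar j| - |θhat j|)
        = (∑ j ∈ T, |θstar j|) - ∑ j ∈ T, |θhat j| := Finset.sum_sub_distrib _ _
    linarith
  -- combine
  have hSTnn : 0 ≤ ST := by rw [hSTdef]; positivity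
  have hSTcnn : 0 ≤ STc := by rw [hSTcdef]; positivity
  have h1c : (0:ℝ) < 1 + 1/c := by positivity
  have h1c' : (0:ℝ) ≤ 1 - 1/c := by
    have : 1/c ≤ 1 := by rw [div_le_one hc0]; linarith
    linarith
  have hQbound : Q ≤ lam*(1+1/c)*ST - lam*(1-1/c)*STc := by
    have hmul := mul_le_mul_of_nonneg_left hNdiff hlam0
    have e : (lam/c)*(ST+STc) + lam*(ST-STc) = lam*(1+1/c)*ST - lam*(1-1/c)*STc := by
      field_simp; ring
    linarith
  have hQ2 : Q ≤ lam*(1+1/c)*ST := by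
    nlinarith [mul_nonneg (mul_nonneg hlam0 h1c') hSTcnn]
  rcases eq_or_lt_of_le hQnn with hQ0 | hQpos
  · rw [← hQ0, Real.sqrt_zero, zero_div]
    apply div_nonneg _ (by positivity)
    exact mul_nonneg (mul_nonneg (by positivity) hlam0) (Real.sqrt_nonneg _)
  · have hprod : 0 < lam*(1+1/c)*ST := lt_of_lt_of_le hQpos hQ2
    have hSTpos : 0 < ST := by
      rcases eq_or_lt_of_le hSTnn with h | h
      · exfalso; rw [← h, mul_zero] at hprod; exact lt_irrefl 0 hprod
      · exact h
    have hlampos : 0 < lam := by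
      rcases eq_or_lt_of_le hlam0 with h | h
      · exfalso; rw [← h, zero_mul, zero_mul] at hprod; exact lt_irrefl 0 hprod
      · exact h
    -- cone condition
    have hBpos : 0 < lam*(1-1/c) := by
      apply mul_pos hlampos
      have : 1/c < 1 := by rw [div_lt_one hc0]; linarith
      linarith
    have hcone : STc ≤ cbar * ST := by
      have e : lam*(1-1/c)*(cbar*ST) = lam*(1+1/c)*ST := by
        rw [hcbar]
        have hc1 : c - 1 ≠ 0 := by intro h; rw [sub_eq_zero] at h; linarith [h.symm]
        field_simp [hc0.ne', hc1]
      have key : lam*(1-1/c)*STc ≤ lam*(1-1/c)*(cbar*ST) := by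
        rw [e]; linarith
      exact le_of_mul_le_mul_left key hBpos
    have hδne : δ ≠ 0 := by
      intro h
      rw [hSTdef, h] at hSTpos
      simp at hSTpos
    have hre := hRE δ hδne (by rw [← hSTdef, ← hSTcdef]; exact hcone)
    rw [← hbdef, ← hQdef] at hre
    set P : ℝ := ∑ j ∈ T, (δ j)^2 with hPdef
    have hPnn : 0 ≤ P := by rw [hPdef]; positivity
    -- Cauchy-Schwarz
    have hCS : ST ≤ Real.sqrt s * Real.sqrt P := by
      have h1 : ST^2 ≤ (s:ℝ) * P := by
        have h2 := Finset.sum_mul_sq_le_sq_mul_sq T (fun _ => (1:ℝ)) (fun j => |δ j|)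
        simp only [one_mul, one_pow, Finset.sum_const, nsmul_eq_mul, sq_abs, mul_one,
          Nat.mul_one, Nat.cast_mul, Nat.cast_one] at h2
        rw [hSTdef, hPdef, hsdef]
        exact_mod_cast h2
      calc ST = Real.sqrt (ST^2) := (Real.sqrt_sq hSTnn).symm
        _ ≤ Real.sqrt ((s:ℝ)*P) := Real.sqrt_le_sqrt h1
        _ = Real.sqrt s * Real.sqrt P := Real.sqrt_mul (Nat.cast_nonneg s) P
    set q : ℝ := Real.sqrt Q with hqdef
    set rn : ℝ := Real.sqrt (n:ℝ) with hrndef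
    clear_value P q rn
    have hqpos : 0 < q := by rw [hqdef]; exact Real.sqrt_pos.mpr hQpos
    have hrnpos : 0 < rn := by rw [hrndef]; exact Real.sqrt_pos.mpr hn'
    have hre' : κ * Real.sqrt P ≤ q / rn := hre
    have hP2 : Real.sqrt P ≤ q/(rn*κ) := by
      rw [le_div_iff₀ (by positivity)]
      have h5 := mul_le_mul_of_nonneg_right hre' hrnpos.le
      rw [div_mul_cancel₀ _ hrnpos.ne'] at h5
      calc Real.sqrt P * (rn*κ) = κ * Real.sqrt P * rn := by ring
        _ ≤ q := h5
    have hQle : q*q ≤ (lam*(1+1/c)*Real.sqrt s/(rn*κ)) * q := by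
      have hqq : q*q = Q := by rw [hqdef]; exact Real.mul_self_sqrt hQnn
      rw [hqq]
      calc Q ≤ lam*(1+1/c)*ST := hQ2
        _ ≤ lam*(1+1/c)*(Real.sqrt s*(q/(rn*κ))) := by
            apply mul_le_mul_of_nonneg_left _ (by positivity)
            calc ST ≤ Real.sqrt s * Real.sqrt P := hCS
              _ ≤ Real.sqrt s * (q/(rn*κ)) :=
                  mul_le_mul_of_nonneg_left hP2 (Real.sqrt_nonneg _)
        _ = (lam*(1+1/c)*Real.sqrt s/(rn*κ))*q := by ring
    have hqle : q ≤ lam*(1+1/c)*Real.sqrt s/(rn*κ) := (mul_le_mul_iff_of_pos_right hqpos).mp hQle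
    rw [div_le_iff₀ hrnpos]
    calc q ≤ lam*(1+1/c)*Real.sqrt s/(rn*κ) := hqle
      _ = (1 + 1/c) * lam * Real.sqrt s / ((n:ℝ) * κ) * rn := by
          rw [show ((n:ℝ)) = rn*rn from by rw [hrndef]; exact (Real.mul_self_sqrt hn'.le).symm]
          rw [div_mul_eq_mul_div, div_eq_div_iff (by positivity) (by positivity)]
          ring
end

section
/- Sublinearity of maximum sparse eigenvalues: Let X be an n×p real matrix and for a positive integer m define φ(m) = sup{‖Xδ‖₂² : δ ∈ ℝ^p, ‖δ‖₀ ≤ m, ‖δ‖₂ ≤ 1}. Then for all positive integers m, k with mk ≤ p, φ(m·k) ≤ m·φ(k). -/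
open scoped Classical

theorem sparse_eigenvalue_sublinear (n p : ℕ) (X : Matrix (Fin n) (Fin p) ℝ)
    (φ : ℕ → ℝ)
    (hφ : ∀ m : ℕ, φ m = sSup {y : ℝ | ∃ δ : Fin p → ℝ,
      (Finset.univ.filter (fun j => δ j ≠ 0)).card ≤ m ∧
        (∑ j, (δ j) ^ 2) ≤ 1 ∧ y = ∑ i, (X.mulVec δ i) ^ 2})
    (m k : ℕ) (hm : 0 < m) (hk : 0 < k) (hmk : m * k ≤ p) :
    φ (m * k) ≤ m * φ k := by
  -- the defining sets
  set S : ℕ → Set ℝ := fun c => {y : ℝ | ∃ δ : Fin p → ℝ,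
      (Finset.univ.filter (fun j => δ j ≠ 0)).card ≤ c ∧
        (∑ j, (δ j) ^ 2) ≤ 1 ∧ y = ∑ i, (X.mulVec δ i) ^ 2} with hS
  -- every S c is bounded above
  have hBdd : ∀ c : ℕ, BddAbove (S c) := by
    intro c
    refine ⟨∑ i, ∑ j, (X i j) ^ 2, ?_⟩
    rintro y ⟨δ, hcard, hnorm, rfl⟩
    apply Finset.sum_le_sum
    intro i _
    have h1 : (X.mulVec δ i) ^ 2 = (∑ j, X i j * δ j) ^ 2 := by
      simp [Matrix.mulVec, dotProduct]
    rw [h1]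
    calc (∑ j, X i j * δ j) ^ 2
        ≤ (∑ j, (X i j) ^ 2) * (∑ j, (δ j) ^ 2) :=
          Finset.sum_mul_sq_le_sq_mul_sq _ _ _
      _ ≤ (∑ j, (X i j) ^ 2) * 1 := by
          apply mul_le_mul_of_nonneg_left hnorm (by positivity)
      _ = ∑ j, (X i j) ^ 2 := mul_one _
  -- 0 belongs to every S c
  have hzero : ∀ c : ℕ, (0 : ℝ) ∈ S c := by
    intro c
    refine ⟨0, ?_, ?_, ?_⟩ <;> simp
  have hφ_nonneg : ∀ c : ℕ, 0 ≤ φ c := by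
    intro c
    rw [hφ c]
    exact le_csSup (hBdd c) (hzero c)
  -- key scaling lemma
  have key : ∀ v : Fin p → ℝ,
      (Finset.univ.filter (fun j => v j ≠ 0)).card ≤ k →
      ∑ i, (X.mulVec v i) ^ 2 ≤ φ k * ∑ j, (v j) ^ 2 := by
    intro v hv
    have hc : (0:ℝ) ≤ ∑ j, (v j) ^ 2 := by positivity
    rcases eq_or_lt_of_le hc with hc0 | hcpos
    · -- v = 0
      have hv0 : ∀ j, v j = 0 := by
        intro j
        have := (Finset.sum_eq_zero_iff_of_nonneg
          (fun j _ => sq_nonneg (v j))).mp hc0.symm j (Finset.mem_univ j)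
        exact pow_eq_zero_iff (n := 2) (by norm_num) |>.mp this
      have : v = 0 := funext hv0
      subst this
      simp
    · set c : ℝ := ∑ j, (v j) ^ 2 with hcdef
      set r : ℝ := Real.sqrt c with hrdef
      have hr : 0 < r := Real.sqrt_pos.mpr hcpos
      have hr2 : r ^ 2 = c := Real.sq_sqrt hc
      have hrne : r ≠ 0 := hr.ne'
      set u : Fin p → ℝ := fun j => r⁻¹ * v j with hudef
      have hmv : X.mulVec u = fun i => r⁻¹ * X.mulVec v i := by
        have : u = r⁻¹ • v := rfl
        rw [this, Matrix.mulVec_smul]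
        rfl
      have hmem : (∑ i, (X.mulVec u i) ^ 2) ∈ S k := by
        refine ⟨u, ?_, ?_, rfl⟩
        · have : (Finset.univ.filter (fun j => u j ≠ 0)) =
              (Finset.univ.filter (fun j => v j ≠ 0)) := by
            apply Finset.filter_congr
            intro j _
            simp [hudef, mul_ne_zero_iff, inv_ne_zero hrne]
          rw [this]; exact hv
        · have : ∑ j, (u j) ^ 2 = (r⁻¹) ^ 2 * c := by
            rw [hcdef, Finset.mul_sum]
            apply Finset.sum_congr rfl
            intro j _
            simp [hudef]; ring
          rw [this, inv_pow, hr2, inv_mul_cancel₀ hcpos.ne']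
      have h2 : ∑ i, (X.mulVec u i) ^ 2 ≤ φ k := by
        rw [hφ k]
        exact le_csSup (hBdd k) hmem
      have h3 : ∑ i, (X.mulVec u i) ^ 2 = c⁻¹ * ∑ i, (X.mulVec v i) ^ 2 := by
        rw [Finset.mul_sum]
        apply Finset.sum_congr rfl
        intro i _
        rw [hmv]
        rw [mul_pow, inv_pow, hr2]
      rw [h3] at h2
      have h4 := mul_le_mul_of_nonneg_left h2 hcpos.le
      rw [← mul_assoc, mul_inv_cancel₀ hcpos.ne', one_mul] at h4
      linarith
  -- main argument
  rw [hφ (m * k)]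
  apply Real.sSup_le
  swap
  · have := hφ_nonneg k
    positivity
  rintro y ⟨δ, hcard, hnorm, rfl⟩
  set s : Finset (Fin p) := Finset.univ.filter (fun j => δ j ≠ 0) with hsdef
  have hs : s.card ≤ m * k := hcard
  set e := s.orderIsoOfFin rfl with hedef
  -- index of an element of s
  set ι : Fin p → ℕ := fun j => if h : j ∈ s then (e.symm ⟨j, h⟩ : ℕ) else 0 with hιdef
  have hι_lt : ∀ j ∈ s, ι j < m * k := by
    intro j hj
    rw [hιdef]
    simp only [dif_pos hj]
    exact lt_of_lt_of_le (e.symm ⟨j, hj⟩).2 hs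
  have hι_inj : ∀ j₁ ∈ s, ∀ j₂ ∈ s, ι j₁ = ι j₂ → j₁ = j₂ := by
    intro j₁ h₁ j₂ h₂ heq
    rw [hιdef] at heq
    simp only [dif_pos h₁, dif_pos h₂] at heq
    have := e.symm.injective (Fin.val_injective heq)
    exact Subtype.ext_iff.mp this
  set idx : Fin p → ℕ := fun j => ι j / k with hidxdef
  set δt : ℕ → Fin p → ℝ := fun t j => if idx j = t ∧ j ∈ s then δ j else 0 with hδtdef
  -- decomposition
  have hdecomp : ∀ j, δ j = ∑ t ∈ Finset.range m, δt t j := by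
    intro j
    by_cases hj : j ∈ s
    · have hlt : idx j < m := by
        rw [hidxdef]
        exact (Nat.div_lt_iff_lt_mul hk).mpr (hι_lt j hj)
      have : ∀ t, δt t j = if idx j = t then δ j else 0 := by
        intro t; rw [hδtdef]; simp [hj]
      simp only [this]
      rw [Finset.sum_ite_eq]
      simp [Finset.mem_range, hlt]
    · have hδj : δ j = 0 := by
        by_contra h
        exact hj (Finset.mem_filter.mpr ⟨Finset.mem_univ j, h⟩)
      have : ∀ t, δt t j = 0 := by
        intro t; rw [hδtdef]; simp [hj]
      simp [this, hδj]
  -- each block is k-sparse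
  have hblock : ∀ t, (Finset.univ.filter (fun j => δt t j ≠ 0)).card ≤ k := by
    intro t
    have hsub : (Finset.univ.filter (fun j => δt t j ≠ 0)) ⊆
        s.filter (fun j => idx j = t) := by
      intro j hj
      rw [Finset.mem_filter] at hj
      have hne := hj.2
      rw [hδtdef] at hne
      by_cases hc : idx j = t ∧ j ∈ s
      · exact Finset.mem_filter.mpr ⟨hc.2, hc.1⟩
      · simp [hc] at hne
    refine le_trans (Finset.card_le_card hsub) ?_
    have : (s.filter (fun j => idx j = t)).card ≤ (Finset.Ico (t * k) (t * k + k)).card := by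
      apply Finset.card_le_card_of_injOn ι
      · intro j hj
        rw [Finset.mem_coe, Finset.mem_filter] at hj
        obtain ⟨hjs, hjt⟩ := hj
        rw [Finset.mem_coe, Finset.mem_Ico]
        have hjt' : ι j / k = t := hjt
        constructor
        · have h0 := Nat.div_mul_le_self (ι j) k
          rw [hjt'] at h0
          exact h0
        · have h1 : ι j / k < t + 1 := by omega
          have h2 := (Nat.div_lt_iff_lt_mul hk).mp h1
          rw [Nat.succ_mul] at h2
          exact h2
      · intro j₁ h₁ j₂ h₂ heq
        rw [Finset.coe_filter] at h₁ h₂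
        exact hι_inj j₁ h₁.1 j₂ h₂.1 heq
    rw [Nat.card_Ico] at this
    omega
  -- sum of block norms
  have hnormsum : ∑ t ∈ Finset.range m, ∑ j, (δt t j) ^ 2 ≤ 1 := by
    refine le_trans ?_ hnorm
    rw [Finset.sum_comm]
    apply Finset.sum_le_sum
    intro j _
    have : ∀ t, (δt t j) ^ 2 = if idx j = t ∧ j ∈ s then (δ j) ^ 2 else 0 := by
      intro t
      simp only [hδtdef]
      split_ifs <;> simp
    simp only [this]
    by_cases hj : j ∈ s
    · simp only [hj, and_true]
      rw [Finset.sum_ite_eq]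
      split <;> [exact le_refl _; positivity]
    · simp [hj]
      positivity
  -- mulVec decomposes
  have hmvdecomp : ∀ i, X.mulVec δ i = ∑ t ∈ Finset.range m, X.mulVec (δt t) i := by
    intro i
    simp only [Matrix.mulVec, dotProduct]
    rw [Finset.sum_comm]
    apply Finset.sum_congr rfl
    intro j _
    rw [← Finset.mul_sum, ← hdecomp j]
  -- main chain
  have hm' : (0:ℝ) ≤ (m:ℝ) := Nat.cast_nonneg m
  have hφk := hφ_nonneg k
  calc ∑ i, (X.mulVec δ i) ^ 2
      = ∑ i, (∑ t ∈ Finset.range m, X.mulVec (δt t) i) ^ 2 := by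
        apply Finset.sum_congr rfl
        intro i _
        rw [hmvdecomp i]
    _ ≤ ∑ i, ((m:ℝ) * ∑ t ∈ Finset.range m, (X.mulVec (δt t) i) ^ 2) := by
        apply Finset.sum_le_sum
        intro i _
        have h := sq_sum_le_card_mul_sum_sq
          (s := Finset.range m) (f := fun t => X.mulVec (δt t) i)
        simpa using h
    _ = (m:ℝ) * ∑ t ∈ Finset.range m, ∑ i, (X.mulVec (δt t) i) ^ 2 := by
        rw [← Finset.mul_sum, Finset.sum_comm]
    _ ≤ (m:ℝ) * ∑ t ∈ Finset.range m, (φ k * ∑ j, (δt t j) ^ 2) := by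
        apply mul_le_mul_of_nonneg_left _ hm'
        apply Finset.sum_le_sum
        intro t _
        exact key (δt t) (hblock t)
    _ = (m:ℝ) * (φ k * ∑ t ∈ Finset.range m, ∑ j, (δt t j) ^ 2) := by
        simp only [Finset.mul_sum]
    _ ≤ (m:ℝ) * (φ k * 1) := by
        apply mul_le_mul_of_nonneg_left _ hm'
        exact mul_le_mul_of_nonneg_left hnormsum hφk
    _ = (m:ℝ) * φ k := by rw [mul_one]
end

section
/- Stability of weighted least squares coefficients in the weights: Let x₁,…,xₙ ∈ ℝ^p, d₁,…,dₙ ∈ ℝ, and nonnegative weight sequences (wᵢ) and (w'ᵢ). Suppose γ and γ' satisfy the normal equations Σᵢ wᵢ(dᵢ − ⟨xᵢ,γ⟩)xᵢ = 0 and Σᵢ w'ᵢ(dᵢ − ⟨xᵢ,γ'⟩)xᵢ = 0. Assume: (i) there is c > 0 with c‖v‖² ≤ Σᵢ w'ᵢ⟨xᵢ,v⟩² for all v ∈ ℝ^p; (ii) there is C ≥ 0 with Σᵢ ⟨xᵢ,v⟩² ≤ C·Σᵢ w'ᵢ⟨xᵢ,v⟩² for all v; (iii) |wᵢ − w'ᵢ|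 ≤ ε for all i; and (iv) Σᵢ (dᵢ − ⟨xᵢ,γ⟩)² ≤ B. Then ‖γ' − γ‖ ≤ ε·√(C·B/c). -/
theorem weighted_ls_stability (n p : ℕ) (hn : 0 < n)
    (x : Fin n → Fin p → ℝ) (d : Fin n → ℝ) (w w' : Fin n → ℝ)
    (hw : ∀ i, 0 ≤ w i) (hw' : ∀ i, 0 ≤ w' i)
    (γ γ' : Fin p → ℝ)
    (hne1 : ∑ i, (w i * (d i - ∑ j, x i j * γ j)) • x i = (0 : Fin p → ℝ))
    (hne2 : ∑ i, (w' i * (d i - ∑ j, x i j * γ' j)) • x i = (0 : Fin p → ℝ))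
    (c : ℝ) (hc : 0 < c)
    (hlow : ∀ v : Fin p → ℝ, c * ∑ j, (v j) ^ 2 ≤ ∑ i, w' i * (∑ j, x i j * v j) ^ 2)
    (C : ℝ) (hC : 0 ≤ C)
    (hup : ∀ v : Fin p → ℝ,
      ∑ i, (∑ j, x i j * v j) ^ 2 ≤ C * ∑ i, w' i * (∑ j, x i j * v j) ^ 2)
    (ε : ℝ) (hεw : ∀ i, |w i - w' i| ≤ ε)
    (B : ℝ) (hB : ∑ i, (d i - ∑ j, x i j * γ j) ^ 2 ≤ B) :
    Real.sqrt (∑ j, (γ' j - γ j) ^ 2) ≤ ε * Real.sqrt (C * B / c) := by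
  have hε0 : 0 ≤ ε := le_trans (abs_nonneg _) (hεw ⟨0, hn⟩)
  have hB0 : 0 ≤ B := le_trans (Finset.sum_nonneg fun i _ => sq_nonneg _) hB
  set δ : Fin p → ℝ := fun j => γ' j - γ j with hδ
  set r : Fin n → ℝ := fun i => d i - ∑ j, x i j * γ j with hrdef
  set t : Fin n → ℝ := fun i => ∑ j, x i j * δ j with htdef
  -- scalar normal equations tested against δ
  have scalar : ∀ (a : Fin n → ℝ),
      (∑ i, a i • x i = (0 : Fin p → ℝ)) → ∑ i, a i * t i = 0 := by
    intro a ha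
    have hcoord : ∀ j, ∑ i, a i * x i j = 0 := by
      intro j
      have := congrFun ha j
      simpa [Finset.sum_apply] using this
    calc ∑ i, a i * t i = ∑ i, ∑ j, (a i * x i j) * δ j := by
          simp only [htdef, Finset.mul_sum, ← mul_assoc]
      _ = ∑ j, (∑ i, a i * x i j) * δ j := by
          rw [Finset.sum_comm]; simp [Finset.sum_mul]
      _ = 0 := by simp [hcoord]
  have h1 : ∑ i, (w i * r i) * t i = 0 := scalar _ hne1
  have h2 : ∑ i, (w' i * (d i - ∑ j, x i j * γ' j)) * t i = 0 := scalar _ hne2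
  set S : ℝ := ∑ i, w' i * t i ^ 2 with hSdef
  have hS0 : 0 ≤ S :=
    Finset.sum_nonneg fun i _ => mul_nonneg (hw' i) (sq_nonneg _)
  -- key identity
  have key : S = ∑ i, (w' i - w i) * r i * t i := by
    have expand : ∀ i, w' i * t i ^ 2 =
        (w' i * r i) * t i - (w' i * (d i - ∑ j, x i j * γ' j)) * t i := by
      intro i
      have ht : t i = r i - (d i - ∑ j, x i j * γ' j) := by
        simp only [htdef, hrdef, hδ, mul_sub, Finset.sum_sub_distrib]
        ring
      rw [ht]; ring
    calc S = ∑ i, ((w' i * r i) * t i - (w' i * (d i - ∑ j, x i j * γ' j)) * t i) := by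
          rw [hSdef]; exact Finset.sum_congr rfl fun i _ => expand i
      _ = ∑ i, (w' i * r i) * t i - ∑ i, (w' i * (d i - ∑ j, x i j * γ' j)) * t i :=
          Finset.sum_sub_distrib _ _
      _ = ∑ i, (w' i * r i) * t i - ∑ i, (w i * r i) * t i := by rw [h1, h2]
      _ = ∑ i, (w' i - w i) * r i * t i := by
          rw [← Finset.sum_sub_distrib]; exact Finset.sum_congr rfl fun i _ => by ring
  -- bound: S ≤ ε * ∑ |r i| * |t i|
  have hbound : S ≤ ε * ∑ i, |r i| * |t i| := by
    rw [key, Finset.mul_sum]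
    refine Finset.sum_le_sum fun i _ => ?_
    calc (w' i - w i) * r i * t i ≤ |(w' i - w i) * r i * t i| := le_abs_self _
      _ = |w' i - w i| * (|r i| * |t i|) := by rw [abs_mul, abs_mul, mul_assoc]
      _ ≤ ε * (|r i| * |t i|) := by
          have : |w' i - w i| ≤ ε := by rw [abs_sub_comm]; exact hεw i
          exact mul_le_mul_of_nonneg_right this (mul_nonneg (abs_nonneg _) (abs_nonneg _))
  -- Cauchy–Schwarz
  have hcs : (∑ i, |r i| * |t i|) ^ 2 ≤ (∑ i, r i ^ 2) * (∑ i, t i ^ 2) := by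
    have := Finset.sum_mul_sq_le_sq_mul_sq Finset.univ (fun i => |r i|) (fun i => |t i|)
    simpa [sq_abs] using this
  have htS : ∑ i, t i ^ 2 ≤ C * S := hup δ
  have hrB : ∑ i, r i ^ 2 ≤ B := hB
  have ht20 : 0 ≤ ∑ i, t i ^ 2 := Finset.sum_nonneg fun i _ => sq_nonneg _
  have hsum0 : 0 ≤ ∑ i, |r i| * |t i| :=
    Finset.sum_nonneg fun i _ => mul_nonneg (abs_nonneg _) (abs_nonneg _)
  have hS2 : S ^ 2 ≤ ε ^ 2 * (B * (C * S)) := by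
    calc S ^ 2 ≤ (ε * ∑ i, |r i| * |t i|) ^ 2 := by
          apply pow_le_pow_left₀ hS0 hbound
      _ = ε ^ 2 * (∑ i, |r i| * |t i|) ^ 2 := by ring
      _ ≤ ε ^ 2 * ((∑ i, r i ^ 2) * (∑ i, t i ^ 2)) :=
          mul_le_mul_of_nonneg_left hcs (sq_nonneg _)
      _ ≤ ε ^ 2 * (B * (C * S)) := by
          apply mul_le_mul_of_nonneg_left _ (sq_nonneg _)
          calc (∑ i, r i ^ 2) * (∑ i, t i ^ 2) ≤ B * (∑ i, t i ^ 2) :=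
                mul_le_mul_of_nonneg_right hrB ht20
            _ ≤ B * (C * S) := mul_le_mul_of_nonneg_left htS hB0
  have hlowδ : c * ∑ j, δ j ^ 2 ≤ S := hlow δ
  have hδ20 : 0 ≤ ∑ j, δ j ^ 2 := Finset.sum_nonneg fun j _ => sq_nonneg _
  have hfinal : ∑ j, δ j ^ 2 ≤ ε ^ 2 * (C * B / c) := by
    rcases eq_or_lt_of_le hS0 with hSeq | hSpos
    · have : c * ∑ j, δ j ^ 2 ≤ 0 := by rw [← hSeq] at hlowδ; exact hlowδ
      have h0 : ∑ j, δ j ^ 2 ≤ 0 := nonpos_of_mul_nonpos_right (by linarith [mul_comm c (∑ j, δ j ^ 2)]) hc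
      have : (0:ℝ) ≤ ε ^ 2 * (C * B / c) :=
        mul_nonneg (sq_nonneg _) (div_nonneg (mul_nonneg hC hB0) hc.le)
      linarith
    · have hSle : S ≤ ε ^ 2 * (B * C) := by nlinarith
      have hh : c * ∑ j, δ j ^ 2 ≤ ε ^ 2 * (B * C) := le_trans hlowδ hSle
      calc ∑ j, δ j ^ 2 ≤ ε ^ 2 * (B * C) / c := by
            rw [le_div_iff₀ hc]; linarith
        _ = ε ^ 2 * (C * B / c) := by ring
  calc Real.sqrt (∑ j, δ j ^ 2) ≤ Real.sqrt (ε ^ 2 * (C * B / c)) :=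
        Real.sqrt_le_sqrt hfinal
    _ = ε * Real.sqrt (C * B / c) := by
        rw [Real.sqrt_mul (sq_nonneg ε), Real.sqrt_sq hε0]
end
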